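/- For every real x > 0, the series ∑_{m=0}^∞ 1/(m!·Γ(m+1))·(x/2)^{2m} equals (1/(π x)) · ∫_0^π ( sinh(x·sin φ) + x·sin φ · cosh(x·sin φ) ) · sin φ dφ. -/

import Mathlib

open Real MeasureTheory Finset

lemma wallis_prod (n : ℕ) : ∏ i ∈ Finset.range n, (2*(i:ℝ)+1)/(2*i+2)
    = (2*n).factorial / (4^n * (n.factorial)^2) := by
  induction n with
  | zero => simp
  | succ k ih =>
    rw [Finset.prod_range_succ, ih]
    have h1 : ((2*(k+1)).factorial : ℝ) = (2*k+2)*(2*k+1)*(2*k).factorial := by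
      have : 2*(k+1) = (2*k+1)+1 := by ring
      rw [this, Nat.factorial_succ, Nat.factorial_succ]; push_cast; ring
    have h2 : ((k+1).factorial : ℝ) = (k+1)*k.factorial := by
      rw [Nat.factorial_succ]; push_cast; ring
    rw [h1, h2]
    have hk : ((2*k).factorial : ℝ) ≠ 0 := by positivity
    have hkf : (k.factorial : ℝ) ≠ 0 := by positivity
    field_simp
    ring

lemma cosh_int (x : ℝ) (hx : 0 < x) :
    ∫ φ in (0:ℝ)..π, Real.cosh (x * Real.sin φ)
      = π * ∑' m : ℕ, (x/2)^(2*m) / ((m.factorial : ℝ))^2 := by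
  have hle : (0:ℝ) ≤ π := pi_pos.le
  have hpt : ∀ φ : ℝ, Real.cosh (x * Real.sin φ)
      = ∑' m : ℕ, (x * Real.sin φ)^(2*m) / ((2*m).factorial) := fun φ =>
    Real.cosh_eq_tsum _
  rw [intervalIntegral.integral_of_le hle]
  simp_rw [hpt]
  set F : ℕ → ℝ → ℝ := fun m φ => (x * Real.sin φ)^(2*m) / ((2*m).factorial) with hF
  have hcont : ∀ m, Continuous (F m) := fun m => by
    apply Continuous.div_const
    exact (continuous_const.mul Real.continuous_sin).pow _
  have hint : ∀ m, IntegrableOn (F m) (Set.Ioc 0 π) volume := fun m =>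
    (hcont m).integrableOn_Ioc
  have hbound : ∀ m, ∀ φ ∈ Set.Ioc (0:ℝ) π, ‖F m φ‖ ≤ x^(2*m) / ((2*m).factorial) := by
    intro m φ _
    rw [Real.norm_eq_abs, abs_div, abs_pow, abs_mul, Nat.abs_cast, abs_of_pos hx]
    apply div_le_div_of_nonneg_right _ (by positivity)
    · calc (x * |Real.sin φ|)^(2*m) ≤ (x * 1)^(2*m) := by
            apply pow_le_pow_left₀ (by positivity)
            exact mul_le_mul_of_nonneg_left (abs_sin_le_one φ) hx.le
        _ = x^(2*m) := by ring
  have hbI : ∀ m, ∫ φ in Set.Ioc (0:ℝ) π, ‖F m φ‖ ≤ π * (x^(2*m) / ((2*m).factorial)) := by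
    intro m
    calc ∫ φ in Set.Ioc (0:ℝ) π, ‖F m φ‖
        ≤ ∫ _ in Set.Ioc (0:ℝ) π, x^(2*m) / ((2*m).factorial) :=
          setIntegral_mono_on (hint m).norm (integrableOn_const (by
            simp [Real.volume_Ioc])) measurableSet_Ioc (hbound m)
      _ = π * (x^(2*m) / ((2*m).factorial)) := by
          rw [setIntegral_const, measureReal_def, Real.volume_Ioc, smul_eq_mul]
          congr 1
          rw [sub_zero, ENNReal.toReal_ofReal hle]
  have hs0 : Summable (fun m : ℕ => (x^2)^m / (m.factorial : ℝ)) :=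
    Real.summable_pow_div_factorial (x^2)
  have hs1 : Summable (fun m : ℕ => x^(2*m) / (((2*m).factorial : ℝ))) := by
    refine Summable.of_nonneg_of_le (fun m => by positivity) (fun m => ?_) hs0
    rw [pow_mul]
    apply div_le_div_of_nonneg_left (by positivity) (by positivity)
    exact_mod_cast Nat.factorial_le (by omega)
  have hsumg : Summable (fun m : ℕ => π * (x^(2*m) / (((2*m).factorial : ℝ)))) :=
    hs1.mul_left π
  have hsum : Summable (fun m : ℕ => ∫ φ in Set.Ioc (0:ℝ) π, ‖F m φ‖) :=
    Summable.of_nonneg_of_le (fun m => integral_nonneg (fun a => norm_nonneg _)) hbI hsumg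
  rw [← MeasureTheory.integral_tsum_of_summable_integral_norm hint hsum]
  have hterm : ∀ m : ℕ, ∫ φ in Set.Ioc (0:ℝ) π, F m φ
      = π * ((x/2)^(2*m) / ((m.factorial : ℝ))^2) := by
    intro m
    rw [← intervalIntegral.integral_of_le hle]
    have heq : ∀ φ : ℝ, F m φ = (x^(2*m) / ((2*m).factorial)) * Real.sin φ^(2*m) := by
      intro φ; simp only [hF, mul_pow]; ring
    simp_rw [heq]
    rw [intervalIntegral.integral_const_mul, integral_sin_pow_even, wallis_prod]
    have h1 : ((2*m).factorial : ℝ) ≠ 0 := by positivity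
    have h2 : (m.factorial : ℝ) ≠ 0 := by positivity
    have h3 : (x/2)^(2*m) = x^(2*m) / 4^m := by
      rw [div_pow]; congr 1; rw [pow_mul]; norm_num
    rw [h3]
    field_simp
  simp_rw [hterm]
  rw [tsum_mul_left]

lemma parts_int (x : ℝ) :
    (∫ φ in (0:ℝ)..π,
        (Real.sinh (x * Real.sin φ) + x * Real.sin φ * Real.cosh (x * Real.sin φ)) *
          Real.sin φ)
      = x * ∫ φ in (0:ℝ)..π, Real.cosh (x * Real.sin φ) := by
  set g : ℝ → ℝ := fun φ =>
    Real.sin φ * Real.sinh (x * Real.sin φ) - x * Real.cos φ^2 * Real.cosh (x * Real.sin φ)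
    with hg
  have hderiv : ∀ φ ∈ Set.uIcc (0:ℝ) π,
      HasDerivAt (fun φ => -Real.cos φ * Real.sinh (x * Real.sin φ)) (g φ) φ := by
    intro φ _
    have h1 : HasDerivAt (fun φ : ℝ => x * Real.sin φ) (x * Real.cos φ) φ :=
      (Real.hasDerivAt_sin φ).const_mul x
    have h2 : HasDerivAt (fun φ : ℝ => Real.sinh (x * Real.sin φ))
        (Real.cosh (x * Real.sin φ) * (x * Real.cos φ)) φ :=
      (Real.hasDerivAt_sinh _).comp φ h1
    have h3 : HasDerivAt (fun φ : ℝ => -Real.cos φ) (Real.sin φ) φ := by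
      have h := (Real.hasDerivAt_cos φ).neg; rw [neg_neg] at h; exact h
    have := h3.mul h2
    refine this.congr_deriv ?_
    simp only [hg]
    ring
  have hgcont : Continuous g := by
    fun_prop
  have hzero : (∫ φ in (0:ℝ)..π, g φ) = 0 := by
    rw [intervalIntegral.integral_eq_sub_of_hasDerivAt hderiv
      (hgcont.intervalIntegrable 0 π)]
    simp
  have hsplit : ∀ φ : ℝ,
      (Real.sinh (x * Real.sin φ) + x * Real.sin φ * Real.cosh (x * Real.sin φ)) *
          Real.sin φ
        = g φ + x * Real.cosh (x * Real.sin φ) := by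
    intro φ
    simp only [hg]
    have := Real.sin_sq_add_cos_sq φ
    linear_combination (x * Real.cosh (x * Real.sin φ)) * this
  simp_rw [hsplit]
  rw [intervalIntegral.integral_add (hgcont.intervalIntegrable 0 π)
    ((by fun_prop : Continuous fun φ => x * Real.cosh (x * Real.sin φ)).intervalIntegrable 0 π),
    hzero, zero_add, intervalIntegral.integral_const_mul]

theorem bessel_I0_integral_representation (x : ℝ) (hx : 0 < x) :
    ∑' m : ℕ, 1 / (m.factorial * Real.Gamma (m + 1)) * (x / 2) ^ (2 * m)
      = (1 / (π * x)) *
        ∫ φ in (0:ℝ)..π,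
          (Real.sinh (x * Real.sin φ) + x * Real.sin φ * Real.cosh (x * Real.sin φ)) *
            Real.sin φ := by
  have hterm : ∀ m : ℕ, 1 / ((m.factorial : ℝ) * Real.Gamma (m + 1)) * (x / 2) ^ (2 * m)
      = (x/2)^(2*m) / ((m.factorial : ℝ))^2 := by
    intro m
    rw [Real.Gamma_nat_eq_factorial, sq]
    ring
  simp_rw [hterm]
  rw [parts_int, cosh_int x hx]
  have hπ : (π : ℝ) ≠ 0 := pi_ne_zero
  field_simp
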